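/- Let {u_t} be a one-parameter unipotent subgroup of SL(k,ℝ) and Δ a discrete subgroup of ℝ^k. If there exists r > 0 such that ‖u_t Δ‖₀ < r for all t ≥ 0, then ‖u_t Δ‖₀ is constant: ‖u_t Δ‖₀ = ‖Δ‖₀ < r for all t ≥ 0. -/

import Mathlib

open Set Matrix

/-- The covolume `‖γ₁ ∧ ⋯ ∧ γ_m‖`, computed via the Gram determinant. -/
noncomputable def covol {k m : ℕ} (γ : Fin m → (Fin k → ℝ)) : ℝ :=
  Real.sqrt (Matrix.det (Matrix.of fun i j => dotProduct (γ i) (γ j)))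

/-- The one-parameter unipotent subgroup `u_t = exp (t X)` generated by a nilpotent
`k × k` matrix `X`. -/
noncomputable def uexp {k : ℕ} (X : Matrix (Fin k) (Fin k) ℝ) (t : ℝ) :
    Matrix (Fin k) (Fin k) ℝ :=
  ∑ i ∈ Finset.range k, (t ^ i / (Nat.factorial i : ℝ)) • X ^ i

/-- Gram determinants are nonnegative. -/
lemma gram_det_nonneg {k m : ℕ} (γ : Fin m → (Fin k → ℝ)) :
    0 ≤ Matrix.det (Matrix.of fun i j => dotProduct (γ i) (γ j)) := by
  set W : Matrix (Fin m) (Fin k) ℝ := Matrix.of γ with hW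
  have hG : (Matrix.of fun i j => dotProduct (γ i) (γ j)) = W * Wᴴ := by
    ext i j
    simp [Matrix.mul_apply, dotProduct, hW, Matrix.conjTranspose_apply]
  have hps : (W * Wᴴ).PosSemidef := Matrix.posSemidef_self_mul_conjTranspose W
  rw [hG, hps.1.det_eq_prod_eigenvalues]
  exact Finset.prod_nonneg fun i _ => hps.eigenvalues_nonneg i

lemma uexp_zero {k : ℕ} (X : Matrix (Fin k) (Fin k) ℝ) : uexp X 0 = 1 := by
  rcases Nat.eq_zero_or_pos k with hk | hk
  · subst hk
    ext a b
    exact a.elim0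
  · unfold uexp
    rw [Finset.sum_eq_single 0]
    · simp
    · intro i _ hne
      simp [zero_pow hne]
    · intro h0
      exact absurd (Finset.mem_range.mpr hk) h0

theorem covolume_bounded_implies_constant
    (k m : ℕ) (X : Matrix (Fin k) (Fin k) ℝ) (hX : IsNilpotent X) (r : ℝ)
    (γ : Fin m → (Fin k → ℝ)) (hγ : LinearIndependent ℝ γ)
    (h : ∀ t : ℝ, 0 ≤ t → covol (fun i => (uexp X t).mulVec (γ i)) < r) :
    ∀ t : ℝ, 0 ≤ t →
      covol (fun i => (uexp X t).mulVec (γ i)) = covol γ ∧ covol γ < r := by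
  classical
  -- polynomial version of the matrix uexp
  set U : Matrix (Fin k) (Fin k) (Polynomial ℝ) :=
    Matrix.of fun a b =>
      ∑ i ∈ Finset.range k, Polynomial.C ((X ^ i) a b / (Nat.factorial i : ℝ)) * Polynomial.X ^ i
    with hUdef
  have hU : ∀ (t : ℝ) a b, Polynomial.eval t (U a b) = uexp X t a b := by
    intro t a b
    simp only [hUdef, uexp, Matrix.of_apply, Polynomial.eval_finset_sum, Polynomial.eval_mul,
      Polynomial.eval_C, Polynomial.eval_pow, Polynomial.eval_X, Matrix.sum_apply,
      Matrix.smul_apply, smul_eq_mul]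
    exact Finset.sum_congr rfl fun i _ => by ring
  -- polynomial version of the moved lattice vectors
  set w : Fin m → Fin k → Polynomial ℝ :=
    fun i => U.mulVec fun a => Polynomial.C (γ i a) with hwdef
  have hw : ∀ (t : ℝ) i l, Polynomial.eval t (w i l) = (uexp X t).mulVec (γ i) l := by
    intro t i l
    simp only [hwdef, Matrix.mulVec, dotProduct, Polynomial.eval_finset_sum,
      Polynomial.eval_mul, Polynomial.eval_C]
    exact Finset.sum_congr rfl fun a _ => by rw [hU]
  -- the Gram determinant polynomial
  set P : Polynomial ℝ :=
    Matrix.det (Matrix.of fun i j => dotProduct (w i) (w j)) with hPdef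
  have hP : ∀ t : ℝ, Polynomial.eval t P =
      Matrix.det (Matrix.of fun i j =>
        dotProduct ((uexp X t).mulVec (γ i)) ((uexp X t).mulVec (γ j))) := by
    intro t
    rw [hPdef, ← Polynomial.coe_evalRingHom, RingHom.map_det]
    congr 1
    ext i j
    simp only [RingHom.mapMatrix_apply, Matrix.map_apply, Matrix.of_apply, dotProduct,
      Polynomial.coe_evalRingHom, Polynomial.eval_finset_sum, Polynomial.eval_mul]
    exact Finset.sum_congr rfl fun l _ => by rw [hw, hw]
  have hcov : ∀ t : ℝ, covol (fun i => (uexp X t).mulVec (γ i)) =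
      Real.sqrt (Polynomial.eval t P) := by
    intro t
    rw [covol, hP]
  have hnn : ∀ t : ℝ, 0 ≤ Polynomial.eval t P := by
    intro t
    rw [hP]
    exact gram_det_nonneg _
  -- r is positive
  have hr : 0 < r := lt_of_le_of_lt (Real.sqrt_nonneg _) (by rw [← hcov 0]; exact h 0 le_rfl)
  -- boundedness of P on [0, ∞)
  have hbd : ∀ t : ℝ, 0 ≤ t → |Polynomial.eval t P| < r ^ 2 := by
    intro t ht
    rw [abs_of_nonneg (hnn t)]
    have := h t ht
    rw [hcov t] at this
    exact (Real.sqrt_lt' hr).mp this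
  -- P has degree ≤ 0
  have hdeg : P.degree ≤ 0 := by
    by_contra hd
    push_neg at hd
    have htend := Polynomial.abs_tendsto_atTop P hd
    obtain ⟨t, hge, ht0⟩ :=
      ((htend.eventually_ge_atTop (r ^ 2)).and (Filter.eventually_ge_atTop (0 : ℝ))).exists
    exact absurd (hbd t ht0) (not_lt.mpr hge)
  have hconst : ∀ t : ℝ, Polynomial.eval t P = Polynomial.eval 0 P := by
    intro t
    rw [Polynomial.eq_C_of_degree_le_zero hdeg]
    simp
  -- value at 0
  have h0 : (fun i => (uexp X 0).mulVec (γ i)) = γ := by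
    funext i
    rw [uexp_zero, Matrix.one_mulVec]
  intro t ht
  have key : covol (fun i => (uexp X t).mulVec (γ i)) = covol γ := by
    rw [hcov t, hconst t, ← hcov 0, h0]
  refine ⟨key, ?_⟩
  rw [← key]
  exact h t ht
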